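/- Let n₀, n₁, n₂ be non-negative integers, and let G be a bipartite graph with partite sets A and B such that |A| = |B| = n₀ + n₁ + n₂ and, for each i ∈ {0, 1, 2}, exactly nᵢ vertices of A have degree i in G (so every vertex of A has degree at most 2). Then G has a bihole of order at least (3/4)·n₀ + (1/2)·(n₁ + n₂) − 7/4. -/

import Mathlib

open Finset

lemma greedy_pick {γ : Type} [DecidableEq γ] (w : γ → ℕ) :
    ∀ (t : Finset γ) (M : ℕ), M < ∑ x ∈ t, w x →
      ∃ S ⊆ t, ∃ c ∈ t, c ∉ S ∧ ∑ x ∈ S, w x ≤ M ∧ M < ∑ x ∈ S, w x + w c ∧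
        (∀ x ∈ S, w c ≤ w x) ∧ (∀ x ∈ t, x ∉ S → w x ≤ w c) := by
  intro t
  induction t using Finset.strongInduction with
  | _ t ih =>
    intro M hM
    have hne : t.Nonempty := by
      rcases t.eq_empty_or_nonempty with rfl | h
      · simp at hM
      · exact h
    obtain ⟨c0, hc0, hmax⟩ := Finset.exists_max_image t w hne
    by_cases hb : M < w c0
    · exact ⟨∅, by simp, c0, hc0, by simp, by simpa, by simpa using hb, by simp,
        fun x hx _ => hmax x hx⟩
    · push_neg at hb
      have hsub : t.erase c0 ⊂ t := Finset.erase_ssubset hc0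
      have hsum : ∑ x ∈ t, w x = w c0 + ∑ x ∈ t.erase c0, w x := by
        rw [← Finset.sum_erase_add t w hc0]; ring
      have hM' : M - w c0 < ∑ x ∈ t.erase c0, w x := by omega
      obtain ⟨S', hS't, c, hct, hcS, h1, h2, h3, h4⟩ := ih _ hsub _ hM'
      have hc0S' : c0 ∉ S' := fun h => (Finset.mem_erase.1 (hS't h)).1 rfl
      refine ⟨insert c0 S', ?_, c, (Finset.mem_erase.1 hct).2, ?_, ?_, ?_, ?_, ?_⟩
      · intro x hx
        rcases Finset.mem_insert.1 hx with rfl | hx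
        · exact hc0
        · exact (Finset.mem_erase.1 (hS't hx)).2
      · intro h
        rcases Finset.mem_insert.1 h with rfl | h
        · exact (Finset.mem_erase.1 hct).1 rfl
        · exact hcS h
      · rw [Finset.sum_insert hc0S']; omega
      · rw [Finset.sum_insert hc0S']; omega
      · intro x hx
        rcases Finset.mem_insert.1 hx with rfl | hx
        · exact hmax c ((Finset.mem_erase.1 hct).2)
        · exact h3 x hx
      · intro x hx hxS
        by_cases hxc : x = c0
        · subst hxc; exact absurd (Finset.mem_insert_self x S') hxS
        · exact h4 x (Finset.mem_erase.2 ⟨hxc, hx⟩) (fun h => hxS (Finset.mem_insert_of_mem h))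


section Core
variable {α β : Type} [DecidableEq α] [DecidableEq β]

lemma core (A' : Finset α) (B : Finset β) (F : α → Finset β)
    (hFB : ∀ a ∈ A', F a ⊆ B) (hF1 : ∀ a ∈ A', 1 ≤ (F a).card)
    (hF2 : ∀ a ∈ A', (F a).card ≤ 2)
    (he : A'.card ≤ B.card)
    (K : ℕ) (hK : 4 * K + A'.card + 4 ≤ 3 * B.card) :
    ∃ T ⊆ B, T.card + K ≤ B.card ∧
      K + A'.card ≤ B.card + (A'.filter (fun a => F a ⊆ T)).card := by
  classical
  set rel : α → α → Prop := fun x y => x ∈ A' ∧ y ∈ A' ∧ (F x ∩ F y).Nonempty with hrel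
  set R : α → α → Prop := fun x y => Relation.ReflTransGen rel x y with hR
  have hrsymm : Symmetric rel := by
    intro x y ⟨h1, h2, h3⟩; exact ⟨h2, h1, by rwa [Finset.inter_comm]⟩
  have hRsymm : ∀ x y, R x y → R y x := fun x y h =>
    (@Relation.ReflTransGen.stdSymm _ rel ⟨hrsymm⟩).symm x y h
  have hRtrans : ∀ x y z, R x y → R y z → R x z := fun x y z h1 h2 =>
    Relation.ReflTransGen.trans h1 h2
  set comp : α → Finset α := fun a => A'.filter (fun b => R a b) with hcompdef
  have mem_comp : ∀ a b, b ∈ comp a ↔ b ∈ A' ∧ R a b := by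
    intro a b; simp [hcompdef]
  have comp_sub : ∀ a, comp a ⊆ A' := fun a => Finset.filter_subset _ _
  have mem_self : ∀ a ∈ A', a ∈ comp a := fun a ha =>
    (mem_comp a a).2 ⟨ha, Relation.ReflTransGen.refl⟩
  have comp_eq : ∀ {a b}, R a b → comp a = comp b := by
    intro a b hab
    ext x
    rw [mem_comp, mem_comp]
    exact ⟨fun ⟨h1, h2⟩ => ⟨h1, hRtrans _ _ _ (hRsymm _ _ hab) h2⟩,
      fun ⟨h1, h2⟩ => ⟨h1, hRtrans _ _ _ hab h2⟩⟩
  -- boundary crossing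
  have cross : ∀ (D : Finset α) (a0 b : α), a0 ∈ D → R a0 b → b ∉ D →
      ∃ x ∈ D, ∃ y, y ∉ D ∧ rel x y := by
    intro D a0 b ha0 hRab
    induction hRab with
    | refl => intro h; exact absurd ha0 h
    | @tail b c hab hbc ih =>
      intro hc
      by_cases hbD : b ∈ D
      · exact ⟨b, hbD, c, hc, hbc⟩
      · exact ih hbD
  -- growing connected subfamilies
  have grow : ∀ a0 ∈ A', ∀ j, j ≤ (comp a0).card → ∃ D ⊆ comp a0,
      D.card = j ∧ (D.biUnion F).card ≤ j + 1 ∧ (j ≠ 0 → a0 ∈ D) := by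
    intro a0 ha0 j
    induction j with
    | zero => intro _; exact ⟨∅, by simp, by simp, by simp, by simp⟩
    | succ j ihj =>
      intro hj
      rcases Nat.eq_zero_or_pos j with rfl | hjpos
      · refine ⟨{a0}, Finset.singleton_subset_iff.2 (mem_self a0 ha0), by simp, ?_,
          fun _ => Finset.mem_singleton_self a0⟩
        have : ({a0} : Finset α).biUnion F = F a0 := by simp
        rw [this]
        exact (hF2 a0 ha0).trans (by omega)
      · obtain ⟨D, hD, hcard, hsupp, hmem⟩ := ihj (by omega)
        have ha0D : a0 ∈ D := hmem (by omega)
        have hex : ∃ b ∈ comp a0, b ∉ D := by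
          by_contra h
          push_neg at h
          have hsub : comp a0 ⊆ D := fun x hx => h x hx
          have := Finset.card_le_card hsub
          omega
        obtain ⟨b, hb, hbD⟩ := hex
        obtain ⟨x, hxD, y, hyD, hr⟩ := cross D a0 b ha0D ((mem_comp a0 b).1 hb).2 hbD
        have hy : y ∈ comp a0 := by
          have hx : x ∈ comp a0 := hD hxD
          exact (mem_comp _ _).2 ⟨hr.2.1,
            Relation.ReflTransGen.tail ((mem_comp _ _).1 hx).2 hr⟩
        refine ⟨insert y D, Finset.insert_subset hy hD, ?_, ?_,
          fun _ => Finset.mem_insert_of_mem ha0D⟩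
        · rw [Finset.card_insert_of_notMem hyD]; omega
        · obtain ⟨v, hv⟩ := hr.2.2
          have hvs : v ∈ D.biUnion F :=
            Finset.mem_biUnion.2 ⟨x, hxD, (Finset.mem_inter.1 hv).1⟩
          have hvy : v ∈ F y := (Finset.mem_inter.1 hv).2
          have h1 : (F y \ D.biUnion F) ⊂ F y := by
            refine ⟨Finset.sdiff_subset, fun hsub' => ?_⟩
            have := hsub' hvy
            simp only [Finset.mem_sdiff] at this
            exact this.2 hvs
          have h2 : (F y \ D.biUnion F).card < (F y).card := Finset.card_lt_card h1
          have h3 : (F y).card ≤ 2 := hF2 y hr.2.1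
          have h4 : ((insert y D).biUnion F).card = (F y ∪ D.biUnion F).card := by
            rw [Finset.biUnion_insert]
          have h5 : (F y \ D.biUnion F).card + (D.biUnion F).card
              = (F y ∪ D.biUnion F).card := Finset.card_sdiff_add_card _ _
          omega
  have supp_le : ∀ a0 ∈ A', ((comp a0).biUnion F).card ≤ (comp a0).card + 1 := by
    intro a0 ha0
    obtain ⟨D, hD, hcard, hsupp, _⟩ := grow a0 ha0 (comp a0).card le_rfl
    have hDeq : D = comp a0 := Finset.eq_of_subset_of_card_le hD (by omega)
    rw [← hDeq]
    omega
  have chunk : ∀ a0 ∈ A', ∀ u, u ≤ (comp a0).card + 1 → ∃ D ⊆ comp a0,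
      (D.biUnion F).card ≤ u ∧ u ≤ D.card + 1 := by
    intro a0 ha0 u hu
    rcases Nat.eq_zero_or_pos u with rfl | hpos
    · exact ⟨∅, by simp, by simp, by simp⟩
    · obtain ⟨D, hD, hcard, hsupp, _⟩ := grow a0 ha0 (u - 1) (by omega)
      exact ⟨D, hD, by omega, by omega⟩
  -- components
  set comps : Finset (Finset α) := A'.image comp with hcomps
  have comps_rep : ∀ c ∈ comps, ∃ a ∈ A', comp a = c := by
    intro c hc
    simpa [hcomps] using Finset.mem_image.1 hc
  have comps_sub : ∀ c ∈ comps, c ⊆ A' := by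
    intro c hc
    obtain ⟨a, _, rfl⟩ := comps_rep c hc
    exact comp_sub a
  have comps_disj : ∀ c ∈ comps, ∀ d ∈ comps, c ≠ d → Disjoint c d := by
    intro c hc d hd hne
    obtain ⟨a, ha, rfl⟩ := comps_rep c hc
    obtain ⟨b, hb, rfl⟩ := comps_rep d hd
    rw [Finset.disjoint_left]
    intro x hxc hxd
    exact hne (comp_eq (hRtrans _ _ _ ((mem_comp a x).1 hxc).2
      (hRsymm _ _ ((mem_comp b x).1 hxd).2)))
  have supp_disj : ∀ c ∈ comps, ∀ d ∈ comps, c ≠ d →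
      Disjoint (c.biUnion F) (d.biUnion F) := by
    intro c hc d hd hne
    obtain ⟨a, ha, rfl⟩ := comps_rep c hc
    obtain ⟨b, hb, rfl⟩ := comps_rep d hd
    rw [Finset.disjoint_left]
    intro v hvc hvd
    obtain ⟨x, hx, hvx⟩ := Finset.mem_biUnion.1 hvc
    obtain ⟨y, hy, hvy⟩ := Finset.mem_biUnion.1 hvd
    have hrxy : rel x y := ⟨(comp_sub a) hx, (comp_sub b) hy,
      ⟨v, Finset.mem_inter.2 ⟨hvx, hvy⟩⟩⟩
    have h1 : R a y := Relation.ReflTransGen.tail ((mem_comp a x).1 hx).2 hrxy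
    exact hne (comp_eq (hRtrans _ _ _ h1 (hRsymm _ _ ((mem_comp b y).1 hy).2)))
  have cover : comps.biUnion id = A' := by
    apply Finset.Subset.antisymm
    · intro x hx
      obtain ⟨c, hc, hxc⟩ := Finset.mem_biUnion.1 hx
      exact comps_sub c hc hxc
    · intro a ha
      exact Finset.mem_biUnion.2 ⟨comp a, Finset.mem_image_of_mem comp ha, mem_self a ha⟩
  have sum_card : ∑ c ∈ comps, c.card = A'.card := by
    have h := Finset.card_biUnion (s := comps) (t := id)
      (fun c hc d hd hne => comps_disj c hc d hd hne)
    rw [cover] at h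
    simpa using h.symm
  have supp_sub_B : ∀ c ∈ comps, c.biUnion F ⊆ B := by
    intro c hc v hv
    obtain ⟨x, hx, hvx⟩ := Finset.mem_biUnion.1 hv
    exact hFB x (comps_sub c hc hx) hvx
  have sum_supp_le : ∑ c ∈ comps, (c.biUnion F).card ≤ B.card := by
    rw [← Finset.card_biUnion (fun c hc d hd hne => supp_disj c hc d hd hne)]
    apply Finset.card_le_card
    intro v hv
    obtain ⟨c, hc, hvc⟩ := Finset.mem_biUnion.1 hv
    exact supp_sub_B c hc hvc
  have comp_supp_le : ∀ c ∈ comps, (c.biUnion F).card ≤ c.card + 1 := by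
    intro c hc
    obtain ⟨a, ha, rfl⟩ := comps_rep c hc
    exact supp_le a ha
  have comp_chunk : ∀ c ∈ comps, ∀ u, u ≤ c.card + 1 → ∃ D ⊆ c,
      (D.biUnion F).card ≤ u ∧ u ≤ D.card + 1 := by
    intro c hc u hu
    obtain ⟨a, ha, rfl⟩ := comps_rep c hc
    exact chunk a ha u hu
  set De : Finset (Finset α) := comps.filter (fun c => (c.biUnion F).card ≤ c.card) with hDedef
  set Tr : Finset (Finset α) := comps.filter (fun c => ¬ (c.biUnion F).card ≤ c.card) with hTrdef
  have hDeSub : De ⊆ comps := Finset.filter_subset _ _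
  have hTrSub : Tr ⊆ comps := Finset.filter_subset _ _
  have tr_eq : ∀ c ∈ Tr, (c.biUnion F).card = c.card + 1 := by
    intro c hc
    have h1 := comp_supp_le c (hTrSub hc)
    have h2 := (Finset.mem_filter.1 hc).2
    omega
  have hsum_split : ∀ f : Finset α → ℕ,
      ∑ c ∈ De, f c + ∑ c ∈ Tr, f c = ∑ c ∈ comps, f c :=
    fun f => Finset.sum_filter_add_sum_filter_not comps _ f
  have hKn : K + 1 ≤ B.card := by omega
  set M := B.card - K with hMdef
  have hKM : K + M = B.card := by omega
  by_cases hcase1 : ∑ c ∈ comps, (c.biUnion F).card ≤ M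
  · -- everything fits
    refine ⟨comps.biUnion (fun c => c.biUnion F), ?_, ?_, ?_⟩
    · intro v hv
      obtain ⟨c, hc, hvc⟩ := Finset.mem_biUnion.1 hv
      exact supp_sub_B c hc hvc
    · have h1 : (comps.biUnion (fun c => c.biUnion F)).card
          ≤ ∑ c ∈ comps, (c.biUnion F).card := Finset.card_biUnion_le
      omega
    · have hsub : A' ⊆ A'.filter (fun a => F a ⊆ comps.biUnion (fun c => c.biUnion F)) := by
        intro a ha
        refine Finset.mem_filter.2 ⟨ha, ?_⟩
        intro v hv
        exact Finset.mem_biUnion.2 ⟨comp a, Finset.mem_image_of_mem comp ha,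
          Finset.mem_biUnion.2 ⟨a, mem_self a ha, hv⟩⟩
      have := Finset.card_le_card hsub
      omega
  · push_neg at hcase1
    by_cases hcase2 : M < ∑ c ∈ De, (c.biUnion F).card
    · -- IIa : greedy on dense components only
      obtain ⟨S, hSDe, cs, hcsDe, hcsS, hsum1, hsum2, hmin, hmax2⟩ :=
        greedy_pick (fun c => (c.biUnion F).card) De M hcase2
      set W := ∑ c ∈ S, (c.biUnion F).card with hWdef
      set u := M - W with hudef
      have hcs_comps : cs ∈ comps := hDeSub hcsDe
      have hucard : u ≤ cs.card + 1 := by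
        have := comp_supp_le cs hcs_comps; omega
      obtain ⟨D, hDcs, hsuppD, huD⟩ := comp_chunk cs hcs_comps u hucard
      refine ⟨S.biUnion (fun c => c.biUnion F) ∪ D.biUnion F, ?_, ?_, ?_⟩
      · intro v hv
        rcases Finset.mem_union.1 hv with h | h
        · obtain ⟨c, hc, hvc⟩ := Finset.mem_biUnion.1 h
          exact supp_sub_B c (hDeSub (hSDe hc)) hvc
        · obtain ⟨x, hx, hvx⟩ := Finset.mem_biUnion.1 h
          exact hFB x (comps_sub cs hcs_comps (hDcs hx)) hvx
      · have h1 := Finset.card_union_le (S.biUnion (fun c => c.biUnion F)) (D.biUnion F)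
        have h2 : (S.biUnion (fun c => c.biUnion F)).card ≤ W := Finset.card_biUnion_le
        omega
      · have hXsub : S.biUnion id ∪ D ⊆
            A'.filter (fun a => F a ⊆ S.biUnion (fun c => c.biUnion F) ∪ D.biUnion F) := by
          intro a ha
          rcases Finset.mem_union.1 ha with h | h
          · obtain ⟨c, hc, hac⟩ := Finset.mem_biUnion.1 h
            refine Finset.mem_filter.2 ⟨comps_sub c (hDeSub (hSDe hc)) hac, ?_⟩
            intro v hv
            exact Finset.mem_union_left _
              (Finset.mem_biUnion.2 ⟨c, hc, Finset.mem_biUnion.2 ⟨a, hac, hv⟩⟩)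
          · refine Finset.mem_filter.2 ⟨comps_sub cs hcs_comps (hDcs h), ?_⟩
            intro v hv
            exact Finset.mem_union_right _ (Finset.mem_biUnion.2 ⟨a, h, hv⟩)
        have hdisj : Disjoint (S.biUnion id) D := by
          rw [Finset.disjoint_left]
          intro x hx hxD
          obtain ⟨c, hc, hxc⟩ := Finset.mem_biUnion.1 hx
          have hne : c ≠ cs := fun h => hcsS (h ▸ hc)
          exact Finset.disjoint_left.1
            (comps_disj c (hDeSub (hSDe hc)) cs hcs_comps hne) hxc (hDcs hxD)
        have hcb : (S.biUnion id).card = ∑ c ∈ S, c.card := by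
          have h := Finset.card_biUnion (s := S) (t := id)
            (fun c hc d hd hne => comps_disj c (hDeSub (hSDe hc)) d (hDeSub (hSDe hd)) hne)
          simpa using h
        have hXcard : ∑ c ∈ S, c.card + D.card = (S.biUnion id ∪ D).card := by
          rw [Finset.card_union_of_disjoint hdisj, hcb]
        have hdense : ∀ c ∈ S, (c.biUnion F).card ≤ c.card :=
          fun c hc => (Finset.mem_filter.1 (hSDe hc)).2
        have hWle : W ≤ ∑ c ∈ S, c.card := Finset.sum_le_sum hdense
        have hfc := Finset.card_le_card hXsub
        omega
    · push_neg at hcase2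
      have hTrsum : M - ∑ c ∈ De, (c.biUnion F).card < ∑ c ∈ Tr, (c.biUnion F).card := by
        have := hsum_split (fun c => (c.biUnion F).card)
        omega
      obtain ⟨S, hSTr, cs, hcsTr, hcsS, hsum1, hsum2, hmin, hmax2⟩ :=
        greedy_pick (fun c => (c.biUnion F).card) Tr
          (M - ∑ c ∈ De, (c.biUnion F).card) hTrsum
      set Vd := ∑ c ∈ De, (c.biUnion F).card with hVddef
      set W := ∑ c ∈ S, (c.biUnion F).card with hWdef
      set u := M - Vd - W with hudef
      set r := (cs.biUnion F).card with hrdef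
      have hury : u + 1 ≤ r := by omega
      have hcs_comps : cs ∈ comps := hTrSub hcsTr
      have hrcs : r = cs.card + 1 := tr_eq cs hcsTr
      have hucard : u ≤ cs.card + 1 := by omega
      obtain ⟨D, hDcs, hsuppD, huD⟩ := comp_chunk cs hcs_comps u hucard
      have hDeS : Disjoint De S := by
        rw [Finset.disjoint_left]
        intro c hc hcS
        exact (Finset.mem_filter.1 (hSTr hcS)).2 (Finset.mem_filter.1 hc).2
      set SS := De ∪ S with hSSdef
      have hSSsub : SS ⊆ comps := by
        intro c hc
        rcases Finset.mem_union.1 hc with h | h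
        · exact hDeSub h
        · exact hTrSub (hSTr h)
      have hcsSS : cs ∉ SS := by
        intro h
        rcases Finset.mem_union.1 h with h | h
        · exact (Finset.mem_filter.1 hcsTr).2 (Finset.mem_filter.1 h).2
        · exact hcsS h
      have hSSsum : ∑ c ∈ SS, (c.biUnion F).card = Vd + W :=
        Finset.sum_union hDeS
      have hSSsumc : ∑ c ∈ SS, c.card = ∑ c ∈ De, c.card + ∑ c ∈ S, c.card :=
        Finset.sum_union hDeS
      refine ⟨SS.biUnion (fun c => c.biUnion F) ∪ D.biUnion F, ?_, ?_, ?_⟩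
      · intro v hv
        rcases Finset.mem_union.1 hv with h | h
        · obtain ⟨c, hc, hvc⟩ := Finset.mem_biUnion.1 h
          exact supp_sub_B c (hSSsub hc) hvc
        · obtain ⟨x, hx, hvx⟩ := Finset.mem_biUnion.1 h
          exact hFB x (comps_sub cs hcs_comps (hDcs hx)) hvx
      · have h1 := Finset.card_union_le (SS.biUnion (fun c => c.biUnion F)) (D.biUnion F)
        have h2 : (SS.biUnion (fun c => c.biUnion F)).card
            ≤ ∑ c ∈ SS, (c.biUnion F).card := Finset.card_biUnion_le
        omega
      · have hXsub : SS.biUnion id ∪ D ⊆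
            A'.filter (fun a => F a ⊆ SS.biUnion (fun c => c.biUnion F) ∪ D.biUnion F) := by
          intro a ha
          rcases Finset.mem_union.1 ha with h | h
          · obtain ⟨c, hc, hac⟩ := Finset.mem_biUnion.1 h
            refine Finset.mem_filter.2 ⟨comps_sub c (hSSsub hc) hac, ?_⟩
            intro v hv
            exact Finset.mem_union_left _
              (Finset.mem_biUnion.2 ⟨c, hc, Finset.mem_biUnion.2 ⟨a, hac, hv⟩⟩)
          · refine Finset.mem_filter.2 ⟨comps_sub cs hcs_comps (hDcs h), ?_⟩
            intro v hv
            exact Finset.mem_union_right _ (Finset.mem_biUnion.2 ⟨a, h, hv⟩)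
        have hdisj : Disjoint (SS.biUnion id) D := by
          rw [Finset.disjoint_left]
          intro x hx hxD
          obtain ⟨c, hc, hxc⟩ := Finset.mem_biUnion.1 hx
          have hne : c ≠ cs := fun h => hcsSS (h ▸ hc)
          exact Finset.disjoint_left.1
            (comps_disj c (hSSsub hc) cs hcs_comps hne) hxc (hDcs hxD)
        have hcb : (SS.biUnion id).card = ∑ c ∈ SS, c.card := by
          have h := Finset.card_biUnion (s := SS) (t := id)
            (fun c hc d hd hne => comps_disj c (hSSsub hc) d (hSSsub hd) hne)
          simpa using h
        have hXcard : ∑ c ∈ De, c.card + ∑ c ∈ S, c.card + D.card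
            = (SS.biUnion id ∪ D).card := by
          rw [Finset.card_union_of_disjoint hdisj, hcb, hSSsumc]
        have hfc := Finset.card_le_card hXsub
        -- numeric bookkeeping
        set U := Tr \ S with hUdef
        have hUsub : U ⊆ Tr := Finset.sdiff_subset
        have hWES : W = ∑ c ∈ S, c.card + S.card := by
          rw [hWdef, Finset.sum_congr rfl (fun c hc => tr_eq c (hSTr hc)),
            Finset.sum_add_distrib]
          simp
        have hRUEU : ∑ c ∈ U, (c.biUnion F).card = ∑ c ∈ U, c.card + U.card := by
          rw [Finset.sum_congr rfl (fun c hc => tr_eq c (hUsub hc)),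
            Finset.sum_add_distrib]
          simp
        have hsplitTr : ∑ c ∈ U, (c.biUnion F).card + W
            = ∑ c ∈ Tr, (c.biUnion F).card := Finset.sum_sdiff hSTr
        have hsplitTrE : ∑ c ∈ U, c.card + ∑ c ∈ S, c.card
            = ∑ c ∈ Tr, c.card := Finset.sum_sdiff hSTr
        have hVdEd : Vd ≤ ∑ c ∈ De, c.card :=
          Finset.sum_le_sum (fun c hc => (Finset.mem_filter.1 hc).2)
        have hsupport : Vd + ∑ c ∈ Tr, (c.biUnion F).card ≤ B.card := by
          have h := hsum_split (fun c => (c.biUnion F).card)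
          omega
        have hecard : ∑ c ∈ De, c.card + ∑ c ∈ Tr, c.card = A'.card := by
          have h := hsum_split (fun c => c.card)
          omega
        have ht'' : 1 ≤ U.card :=
          Finset.card_pos.2 ⟨cs, Finset.mem_sdiff.2 ⟨hcsTr, hcsS⟩⟩
        have htW : S.card * r ≤ W := by
          have h := Finset.card_nsmul_le_sum S (fun c => (c.biUnion F).card) r hmin
          simpa [smul_eq_mul] using h
        have htR : ∑ c ∈ U, (c.biUnion F).card ≤ U.card * r := by
          have h := Finset.sum_le_card_nsmul U (fun c => (c.biUnion F).card) r
            (fun x hx => hmax2 x (Finset.mem_sdiff.1 hx).1 (Finset.mem_sdiff.1 hx).2)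
          simpa [smul_eq_mul] using h
        rcases le_or_gt U.card S.card with hle | hlt
        · obtain ⟨s0, hs0⟩ : ∃ s0, r = s0 + 1 := ⟨r - 1, by omega⟩
          have hmul : U.card * s0 ≤ S.card * s0 := Nat.mul_le_mul_right s0 hle
          have e1 : U.card * r = U.card * s0 + U.card := by rw [hs0]; ring
          have e2 : S.card * r = S.card * s0 + S.card := by rw [hs0]; ring
          omega
        · omega

end Core

/-- `A`, `B` form a bipartition of the simple graph `G`: they are disjoint,
cover all vertices, and every edge joins `A` to `B`. -/
def IsBipartition {V : Type} [DecidableEq V] [Fintype V] (G : SimpleGraph V) (A B : Finset V) : Prop :=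
  Disjoint A B ∧ A ∪ B = Finset.univ ∧
    ∀ u v : V, G.Adj u v → (u ∈ A ∧ v ∈ B) ∨ (u ∈ B ∧ v ∈ A)

/-- `G` (with bipartition `A`, `B`) has a bihole of order `k`: an independent
set `I` with `|I ∩ A| = |I ∩ B| = k`. -/
def HasBihole {V : Type} [DecidableEq V] [Fintype V] (G : SimpleGraph V) (A B : Finset V) (k : ℕ) : Prop :=
  ∃ I : Finset V, (∀ u ∈ I, ∀ v ∈ I, ¬ G.Adj u v) ∧ (I ∩ A).card = k ∧ (I ∩ B).card = k

/-- If `|A| = |B| = n₀ + n₁ + n₂` and exactly `nᵢ` vertices of `A` have degree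
`i` for `i ∈ {0,1,2}`, then `G` has a bihole of order at least
`(3/4)·n₀ + (1/2)·(n₁ + n₂) − 7/4`. -/
theorem stmt2 (n0 n1 n2 : ℕ)
    (V : Type) [DecidableEq V] [Fintype V] (G : SimpleGraph V) [DecidableRel G.Adj]
    (A B : Finset V) (hbip : IsBipartition G A B)
    (hA : A.card = n0 + n1 + n2) (hB : B.card = n0 + n1 + n2)
    (h0 : (A.filter (fun u => G.degree u = 0)).card = n0)
    (h1 : (A.filter (fun u => G.degree u = 1)).card = n1)
    (h2 : (A.filter (fun u => G.degree u = 2)).card = n2) :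
    ∃ k : ℕ, HasBihole G A B k ∧
      (k : ℝ) ≥ 3 / 4 * (n0 : ℝ) + 1 / 2 * ((n1 : ℝ) + (n2 : ℝ)) - 7 / 4 := by

  classical
  obtain ⟨hdisjAB, hcover, hadjAB⟩ := hbip
  by_cases hq : 3 * n0 + 2 * n1 + 2 * n2 ≤ 7
  · refine ⟨0, ⟨∅, by simp, by simp, by simp⟩, ?_⟩
    have hq' : (3 * n0 + 2 * n1 + 2 * n2 : ℝ) ≤ 7 := by exact_mod_cast hq
    push_cast at hq' ⊢
    linarith
  · push_neg at hq
    set K := (3 * n0 + 2 * n1 + 2 * n2 - 4) / 4 with hKdef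
    -- all degrees at most 2
    have hdeg : ∀ a ∈ A, G.degree a ≤ 2 := by
      intro a ha
      set A0 := A.filter (fun u => G.degree u = 0) with hA0
      set A1 := A.filter (fun u => G.degree u = 1) with hA1
      set A2 := A.filter (fun u => G.degree u = 2) with hA2
      have hd01 : Disjoint A0 A1 := by
        rw [Finset.disjoint_left]
        intro x hx hx'
        have e0 := (Finset.mem_filter.1 hx).2
        have e1 := (Finset.mem_filter.1 hx').2
        omega
      have hd012 : Disjoint (A0 ∪ A1) A2 := by
        rw [Finset.disjoint_left]
        intro x hx hx'
        have e2 := (Finset.mem_filter.1 hx').2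
        rcases Finset.mem_union.1 hx with h | h
        · have := (Finset.mem_filter.1 h).2; omega
        · have := (Finset.mem_filter.1 h).2; omega
      have hsub : A0 ∪ A1 ∪ A2 ⊆ A := by
        intro x hx
        rcases Finset.mem_union.1 hx with h | h
        · rcases Finset.mem_union.1 h with h' | h'
          · exact Finset.filter_subset _ _ h'
          · exact Finset.filter_subset _ _ h'
        · exact Finset.filter_subset _ _ h
      have hcard : (A0 ∪ A1 ∪ A2).card = A.card := by
        rw [Finset.card_union_of_disjoint hd012, Finset.card_union_of_disjoint hd01,
          h0, h1, h2, hA]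
      have heq : A0 ∪ A1 ∪ A2 = A := Finset.eq_of_subset_of_card_le hsub (le_of_eq hcard.symm)
      have haU : a ∈ A0 ∪ A1 ∪ A2 := heq ▸ ha
      rcases Finset.mem_union.1 haU with h | h
      · rcases Finset.mem_union.1 h with h' | h'
        · have := (Finset.mem_filter.1 h').2; omega
        · have := (Finset.mem_filter.1 h').2; omega
      · have := (Finset.mem_filter.1 h).2; omega
    set A' := A.filter (fun a => ¬ G.degree a = 0) with hA'def
    have hA'card : A'.card = n1 + n2 := by
      rw [hA'def, Finset.filter_not, Finset.card_sdiff_of_subset (Finset.filter_subset _ _), h0, hA]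
      omega
    have hAnotB : ∀ a ∈ A, a ∉ B := fun a ha => Finset.disjoint_left.1 hdisjAB ha
    have hFB : ∀ a ∈ A', G.neighborFinset a ⊆ B := by
      intro a ha v hv
      have hadj := (SimpleGraph.mem_neighborFinset _ _ _).1 hv
      rcases hadjAB a v hadj with ⟨haA, hvB⟩ | ⟨haB, _⟩
      · exact hvB
      · exact absurd haB (hAnotB a (Finset.filter_subset _ _ ha))
    have hF1 : ∀ a ∈ A', 1 ≤ (G.neighborFinset a).card := by
      intro a ha
      have := (Finset.mem_filter.1 ha).2
      rw [G.card_neighborFinset_eq_degree]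
      omega
    have hF2 : ∀ a ∈ A', (G.neighborFinset a).card ≤ 2 := by
      intro a ha
      rw [G.card_neighborFinset_eq_degree]
      exact hdeg a (Finset.filter_subset _ _ ha)
    have he : A'.card ≤ B.card := by rw [hA'card, hB]; omega
    have hKcond : 4 * K + A'.card + 4 ≤ 3 * B.card := by
      rw [hA'card, hB]
      omega
    obtain ⟨T, hTB, hTcard, hcont⟩ :=
      core A' B (fun a => G.neighborFinset a) hFB hF1 hF2 he K hKcond
    set SA := A.filter (fun a => G.neighborFinset a ⊆ T) with hSAdef
    have hSAcard : K ≤ SA.card := by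
      set A0 := A.filter (fun u => G.degree u = 0) with hA0
      have hA0sub : A0 ⊆ SA := by
        intro a ha
        refine Finset.mem_filter.2 ⟨Finset.filter_subset _ _ ha, ?_⟩
        have hd : (G.neighborFinset a).card = 0 := by
          rw [G.card_neighborFinset_eq_degree]
          exact (Finset.mem_filter.1 ha).2
        rw [Finset.card_eq_zero.1 hd]
        exact Finset.empty_subset _
      have hA'fsub : A'.filter (fun a => G.neighborFinset a ⊆ T) ⊆ SA := by
        intro a ha
        have h1 := Finset.mem_filter.1 ha
        exact Finset.mem_filter.2 ⟨Finset.filter_subset _ _ h1.1, h1.2⟩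
      have hdisj : Disjoint A0 (A'.filter (fun a => G.neighborFinset a ⊆ T)) := by
        rw [Finset.disjoint_left]
        intro x hx hx'
        exact (Finset.mem_filter.1 (Finset.filter_subset _ _ hx')).2 (Finset.mem_filter.1 hx).2
      have hcup : A0 ∪ A'.filter (fun a => G.neighborFinset a ⊆ T) ⊆ SA :=
        Finset.union_subset hA0sub hA'fsub
      have hcupcard := Finset.card_le_card hcup
      rw [Finset.card_union_of_disjoint hdisj, h0] at hcupcard
      rw [hA'card, hB] at hcont
      omega
    have hSBcard : K ≤ (B \ T).card := by
      rw [Finset.card_sdiff_of_subset hTB]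
      omega
    obtain ⟨X, hXsub, hXcard⟩ := Finset.exists_subset_card_eq hSAcard
    obtain ⟨Y, hYsub, hYcard⟩ := Finset.exists_subset_card_eq hSBcard
    have hXA : X ⊆ A := hXsub.trans (Finset.filter_subset _ _)
    have hYBT : Y ⊆ B \ T := hYsub
    have hYB : Y ⊆ B := fun y hy => (Finset.mem_sdiff.1 (hYBT hy)).1
    have hXnotB : ∀ x ∈ X, x ∉ B := fun x hx => hAnotB x (hXA hx)
    have hYnotA : ∀ y ∈ Y, y ∉ A := by
      intro y hy hyA
      exact hAnotB y hyA (hYB hy)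
    refine ⟨K, ⟨X ∪ Y, ?_, ?_, ?_⟩, ?_⟩
    · intro x hx y hy hadj
      have key : ∀ u v : V, u ∈ X → v ∈ Y → ¬ G.Adj u v := by
        intro u v hu hv hadj'
        have huSA := hXsub hu
        have hnb : v ∈ G.neighborFinset u := (SimpleGraph.mem_neighborFinset _ _ _).2 hadj'
        have hvT : v ∈ T := (Finset.mem_filter.1 huSA).2 hnb
        exact (Finset.mem_sdiff.1 (hYBT hv)).2 hvT
      rcases Finset.mem_union.1 hx with hxX | hxY <;> rcases Finset.mem_union.1 hy with hyX | hyY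
      · rcases hadjAB x y hadj with ⟨_, hyB⟩ | ⟨hxB, _⟩
        · exact hXnotB y hyX hyB
        · exact hXnotB x hxX hxB
      · exact key x y hxX hyY hadj
      · exact key y x hyX hxY hadj.symm
      · rcases hadjAB x y hadj with ⟨hxA, _⟩ | ⟨_, hyA⟩
        · exact hYnotA x hxY hxA
        · exact hYnotA y hyY hyA
    · have : (X ∪ Y) ∩ A = X := by
        ext z
        simp only [Finset.mem_inter, Finset.mem_union]
        constructor
        · rintro ⟨hz1 | hz1, hz2⟩
          · exact hz1
          · exact absurd hz2 (hYnotA z hz1)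
        · intro hz
          exact ⟨Or.inl hz, hXA hz⟩
      rw [this, hXcard]
    · have : (X ∪ Y) ∩ B = Y := by
        ext z
        simp only [Finset.mem_inter, Finset.mem_union]
        constructor
        · rintro ⟨hz1 | hz1, hz2⟩
          · exact absurd hz2 (hXnotB z hz1)
          · exact hz1
        · intro hz
          exact ⟨Or.inr hz, hYB hz⟩
      rw [this, hYcard]
    · have hKlow : 3 * n0 + 2 * n1 + 2 * n2 ≤ 4 * K + 7 := by
        rw [hKdef]
        omega
      have : (3 * n0 + 2 * n1 + 2 * n2 : ℝ) ≤ 4 * K + 7 := by exact_mod_cast hKlow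
      push_cast at this ⊢
      linarith
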